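/- Let n ≥ 3 be an integer and set α(n) = ∫_{ℝ^{n−1}} (1 + |ȳ|²)^{1−n} dȳ (a finite positive number). There exists a constant C > 0, depending only on n, such that for all real numbers ε, δ, ρ with 0 < ε < δ ≤ ρ: δ ∫_{{x̄ ∈ ℝ^{n−1} : |x̄| ≤ ρ/2}} (ε² + |x̄|² + δ²)^{1−n} dx̄ ≥ 2^{1−n} δ^{2−n} ( α(n) − C (δ/ρ)^{n−1} ). (Key lower bound established in the proof of Lemma 3.12 of Almaraz–Sun.) -/

import Mathlib

open MeasureTheory
open Metric Set Module Pointwise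


private lemma aux_integrable (n : ℕ) (hn : 3 ≤ n) :
    Integrable (fun y : EuclideanSpace ℝ (Fin (n-1)) => (1 + ‖y‖ ^ 2) ^ ((1:ℝ) - n)) := by
  have hn3 : (3:ℝ) ≤ (n:ℝ) := by exact_mod_cast hn
  have hcast : ((n - 1 : ℕ) : ℝ) = (n : ℝ) - 1 := by
    rw [Nat.cast_sub (by omega)]; simp
  have h : (finrank ℝ (EuclideanSpace ℝ (Fin (n-1))) : ℝ) < 2 * ((n:ℝ) - 1) := by
    rw [finrank_euclideanSpace_fin, hcast]; nlinarith
  have h2 := integrable_rpow_neg_one_add_norm_sq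
    (μ := (volume : Measure (EuclideanSpace ℝ (Fin (n-1))))) h
  have : -(2 * ((n:ℝ) - 1)) / 2 = (1:ℝ) - n := by ring
  rwa [this] at h2


private lemma aux_tail_lem (n : ℕ) (hn : 3 ≤ n) {R : ℝ} (hR : 0 < R) :
    ∫ y in (closedBall (0 : EuclideanSpace ℝ (Fin (n-1))) R)ᶜ, (1 + ‖y‖ ^ 2) ^ ((1:ℝ) - n)
      ≤ (volume (ball (0 : EuclideanSpace ℝ (Fin (n-1))) 1)).toReal * R ^ ((1:ℝ) - n) := by
  have hn3 : (3:ℝ) ≤ (n:ℝ) := by exact_mod_cast hn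
  haveI : Nonempty (Fin (n-1)) := ⟨⟨0, by omega⟩⟩
  have hdim : finrank ℝ (EuclideanSpace ℝ (Fin (n-1))) = n - 1 := finrank_euclideanSpace_fin
  haveI : Nontrivial (EuclideanSpace ℝ (Fin (n-1))) := by
    exact Module.finrank_pos_iff (R := ℝ).mp (by rw [hdim]; omega)
  set E := EuclideanSpace ℝ (Fin (n-1)) with hE
  set p : ℝ := (1:ℝ) - n with hp
  set f : ℝ → ℝ := (Set.Ioi R).indicator (fun r => (1 + r^2) ^ p) with hf
  have key : ∀ y : E, ((closedBall (0:E) R)ᶜ).indicator (fun y => (1 + ‖y‖^2) ^ p) y = f ‖y‖ := by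
    intro y
    simp only [hf, Set.indicator, Set.mem_compl_iff, mem_closedBall_zero_iff, Set.mem_Ioi, not_le]
  have step1 : ∫ y in (closedBall (0:E) R)ᶜ, (1 + ‖y‖^2) ^ p = ∫ y : E, f ‖y‖ := by
    rw [← integral_indicator measurableSet_closedBall.compl]
    exact integral_congr_ae (Filter.Eventually.of_forall key)
  rw [step1, integral_fun_norm_addHaar volume f, hdim]
  -- inner integral bound
  have hcast : ((n - 1 - 1 : ℕ) : ℝ) = (n:ℝ) - 2 := by
    rw [Nat.cast_sub (by omega), Nat.cast_sub (by omega)]; push_cast; ring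
  have hptwise : ∀ y ∈ Set.Ioi R, y ^ (n - 1 - 1) * (1 + y^2) ^ p ≤ y ^ (-(n:ℝ)) := by
    intro y hy
    have hy0 : 0 < y := lt_trans hR hy
    have h1 : (1 + y^2 : ℝ) ^ p ≤ (y^2) ^ p :=
      Real.rpow_le_rpow_of_nonpos (by positivity) (by linarith [sq_nonneg y]) (by rw [hp]; linarith)
    have h2 : y ^ (n - 1 - 1) * (y^2 : ℝ) ^ p = y ^ (-(n:ℝ)) := by
      rw [← Real.rpow_natCast y (n-1-1), ← Real.rpow_natCast y 2, ← Real.rpow_mul hy0.le,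
        ← Real.rpow_add hy0, hcast]
      norm_num [hp]; ring_nf
      rw [Real.rpow_neg hy0.le, Real.rpow_natCast, inv_pow]
    calc y ^ (n - 1 - 1) * (1 + y^2) ^ p ≤ y ^ (n - 1 - 1) * (y^2) ^ p := by
          apply mul_le_mul_of_nonneg_left h1 (by positivity)
      _ = y ^ (-(n:ℝ)) := h2
  have hmajint : IntegrableOn (fun y : ℝ => y ^ (-(n:ℝ))) (Set.Ioi R) :=
    integrableOn_Ioi_rpow_of_lt (by linarith) hR
  have hcont : Continuous (fun y : ℝ => y ^ (n - 1 - 1) * (1 + y^2) ^ p) := by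
    apply (continuous_pow _).mul
    exact (continuous_const.add (continuous_pow 2)).rpow_const fun x => Or.inl (ne_of_gt (by positivity : (0:ℝ) < 1 + x^2))
  have hHint : IntegrableOn (fun y : ℝ => y ^ (n - 1 - 1) * (1 + y^2) ^ p) (Set.Ioi R) := by
    apply hmajint.mono' hcont.aestronglyMeasurable
    filter_upwards [ae_restrict_mem measurableSet_Ioi] with y hy
    have hy0 : 0 < y := lt_trans hR hy
    rw [Real.norm_eq_abs, abs_of_nonneg (by positivity)]
    exact hptwise y hy
  have hindstep : ∫ y in Set.Ioi (0:ℝ), y ^ (n - 1 - 1) • f y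
      = ∫ y in Set.Ioi R, y ^ (n - 1 - 1) * (1 + y^2) ^ p := by
    have : ∀ y : ℝ, y ^ (n - 1 - 1) • f y
        = (Set.Ioi R).indicator (fun y => y ^ (n - 1 - 1) * (1 + y^2) ^ p) y := by
      intro y
      by_cases h : y ∈ Set.Ioi R
      · simp [hf, Set.indicator_of_mem h]
      · simp [hf, Set.indicator_of_notMem h]
    simp_rw [this]
    rw [setIntegral_indicator measurableSet_Ioi, Set.Ioi_inter_Ioi, max_eq_right hR.le]
  have hioi : ∫ y in Set.Ioi R, (fun y : ℝ => y ^ (-(n:ℝ))) y = R ^ ((1:ℝ)-n) / ((n:ℝ) - 1) := by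
    rw [integral_Ioi_rpow_of_lt (by linarith) hR,
      show -(n:ℝ) + 1 = (1:ℝ) - n by ring,
      div_eq_div_iff (by linarith : (1:ℝ) - n ≠ 0) (by linarith : (n:ℝ) - 1 ≠ 0)]
    ring
  have hinner : ∫ y in Set.Ioi (0:ℝ), y ^ (n - 1 - 1) • f y ≤ R ^ ((1:ℝ)-n) / ((n:ℝ) - 1) := by
    rw [hindstep, ← hioi]
    exact setIntegral_mono_on hHint hmajint measurableSet_Ioi hptwise
  -- combine
  have hvol0 : (0:ℝ) ≤ (volume (ball (0:E) 1)).toReal := ENNReal.toReal_nonneg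
  have hcast1 : ((n - 1 : ℕ) : ℝ) = (n:ℝ) - 1 := by rw [Nat.cast_sub (by omega)]; simp
  rw [nsmul_eq_mul, smul_eq_mul, hcast1]
  calc ((n:ℝ) - 1) * ((volume (ball (0:E) 1)).toReal * ∫ y in Set.Ioi (0:ℝ), y ^ (n - 1 - 1) • f y)
      ≤ ((n:ℝ) - 1) * ((volume (ball (0:E) 1)).toReal * (R ^ ((1:ℝ)-n) / ((n:ℝ) - 1))) := by
        apply mul_le_mul_of_nonneg_left (mul_le_mul_of_nonneg_left hinner hvol0) (by linarith)
    _ = (volume (ball (0:E) 1)).toReal * R ^ ((1:ℝ)-n) := by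
        rw [mul_comm ((n:ℝ) - 1), mul_assoc, div_mul_eq_mul_div, mul_div_assoc,
          div_self (by linarith : (n:ℝ) - 1 ≠ 0), mul_one]

/-- Key lower bound from the proof of Lemma 3.12 of Almaraz–Sun: with
`α(n) = ∫_{ℝ^{n−1}} (1+|ȳ|²)^{1−n} dȳ`, there is `C = C(n) > 0` such that for all
`0 < ε < δ ≤ ρ`,
`δ ∫_{|x̄| ≤ ρ/2} (ε² + |x̄|² + δ²)^{1−n} dx̄ ≥ 2^{1−n} δ^{2−n} (α(n) − C (δ/ρ)^{n−1})`. -/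
theorem stmt11 (n : ℕ) (hn : 3 ≤ n) :
    ∃ C : ℝ, 0 < C ∧ ∀ ε δ ρ : ℝ, 0 < ε → ε < δ → δ ≤ ρ →
      (2 : ℝ) ^ ((1 : ℝ) - (n : ℝ)) * δ ^ ((2 : ℝ) - (n : ℝ)) *
          ((∫ y : EuclideanSpace ℝ (Fin (n - 1)), (1 + ‖y‖ ^ 2) ^ ((1 : ℝ) - (n : ℝ)))
            - C * (δ / ρ) ^ ((n : ℝ) - 1))
        ≤ δ * ∫ x in Metric.closedBall (0 : EuclideanSpace ℝ (Fin (n - 1))) (ρ / 2),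
            (ε ^ 2 + ‖x‖ ^ 2 + δ ^ 2) ^ ((1 : ℝ) - (n : ℝ)) := by
  have aux_tail : ∀ {R : ℝ}, 0 < R →
      ∫ y in (closedBall (0 : EuclideanSpace ℝ (Fin (n-1))) R)ᶜ, (1 + ‖y‖ ^ 2) ^ ((1:ℝ) - n)
        ≤ (volume (ball (0 : EuclideanSpace ℝ (Fin (n-1))) 1)).toReal * R ^ ((1:ℝ) - n) :=
    fun {R} hR => aux_tail_lem n hn hR
  have hn3 : (3:ℝ) ≤ (n:ℝ) := by exact_mod_cast hn
  set E := EuclideanSpace ℝ (Fin (n-1)) with hE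
  set p : ℝ := (1:ℝ) - n with hp
  have hp0 : p ≤ 0 := by rw [hp]; linarith
  refine ⟨(volume (ball (0:E) 1)).toReal * 2 ^ ((n:ℝ) - 1) + 1, by positivity, ?_⟩
  intro ε δ ρ hε hεδ hδρ
  have hδ : 0 < δ := lt_trans hε hεδ
  have hρ : 0 < ρ := lt_of_lt_of_le hδ hδρ
  set C : ℝ := (volume (ball (0:E) 1)).toReal * 2 ^ ((n:ℝ) - 1) + 1 with hC
  set α : ℝ := ∫ y : E, (1 + ‖y‖ ^ 2) ^ p with hα
  set R : ℝ := ρ / (2 * δ) with hR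
  have hR0 : 0 < R := by positivity
  set J : ℝ := ∫ y in closedBall (0:E) R, (1 + ‖y‖ ^ 2) ^ p with hJ
  have hgi : Integrable (fun y : E => (1 + ‖y‖ ^ 2) ^ p) := aux_integrable n hn
  -- tail bound
  have hsplit : J + (∫ y in (closedBall (0:E) R)ᶜ, (1 + ‖y‖ ^ 2) ^ p) = α :=
    integral_add_compl measurableSet_closedBall hgi
  have hRpow : R ^ ((1:ℝ) - n) = 2 ^ ((n:ℝ)-1) * (δ/ρ) ^ ((n:ℝ)-1) := by
    have h1 : R ^ ((1:ℝ) - n) = (R⁻¹) ^ ((n:ℝ)-1) := by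
      rw [show (1:ℝ)-n = -((n:ℝ)-1) by ring, Real.rpow_neg hR0.le,
        ← Real.inv_rpow hR0.le]
    rw [h1, hR, show (ρ/(2*δ))⁻¹ = 2 * (δ/ρ) by field_simp,
      Real.mul_rpow (by norm_num) (by positivity)]
  have hδρ0 : (0:ℝ) ≤ (δ/ρ) ^ ((n:ℝ)-1) := Real.rpow_nonneg (by positivity) _
  have htail : α - J ≤ C * (δ/ρ) ^ ((n:ℝ)-1) := by
    have h2 := aux_tail hR0
    rw [hRpow] at h2
    have h3 : α - J = ∫ y in (closedBall (0:E) R)ᶜ, (1 + ‖y‖ ^ 2) ^ p := by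
      rw [← hsplit]; ring
    rw [h3, hC]
    nlinarith [ENNReal.toReal_nonneg (a := volume (ball (0:E) 1))]
  have hkey : α - C * (δ/ρ) ^ ((n:ℝ)-1) ≤ J := by linarith
  -- scaling
  have hfr : finrank ℝ E = n - 1 := finrank_euclideanSpace_fin
  have hδ2p : ((δ^2 : ℝ)) ^ p = δ ^ (2*p) := by
    rw [show (δ^2:ℝ) = δ ^ ((2:ℕ):ℝ) by rw [Real.rpow_natCast], ← Real.rpow_mul hδ.le]
    norm_num
  have hcomp := Measure.setIntegral_comp_smul_of_pos (volume : Measure E)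
    (fun x : E => (δ^2 + ‖x‖^2) ^ p) (closedBall (0:E) R) hδ
  have hδR : δ * R = ρ / 2 := by rw [hR]; field_simp
  have hsmulset : δ • closedBall (0:E) R = closedBall (0:E) (ρ/2) := by
    rw [smul_closedBall' (ne_of_gt hδ) (0:E) R, smul_zero, Real.norm_eq_abs,
      abs_of_pos hδ, hδR]
  have hlhs : ∫ y in closedBall (0:E) R, (δ^2 + ‖δ • y‖^2) ^ p = δ ^ (2*p) * J := by
    have : ∀ y : E, (δ^2 + ‖δ • y‖^2) ^ p = δ ^ (2*p) * (1 + ‖y‖^2) ^ p := by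
      intro y
      rw [norm_smul, Real.norm_eq_abs, mul_pow, sq_abs,
        show δ^2 + δ^2 * ‖y‖^2 = δ^2 * (1 + ‖y‖^2) by ring,
        Real.mul_rpow (sq_nonneg δ) (by positivity), hδ2p]
    simp_rw [this]
    rw [integral_const_mul]
  rw [hsmulset] at hcomp
  rw [hlhs, hfr, smul_eq_mul] at hcomp
  have hδpow : (δ:ℝ) ^ (n - 1) = δ ^ ((n:ℝ) - 1) := by
    rw [← Real.rpow_natCast δ (n-1), Nat.cast_sub (by omega)]
    norm_num
  have hscale : ∫ x in closedBall (0:E) (ρ/2), (δ^2 + ‖x‖^2) ^ p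
      = δ ^ ((n:ℝ)-1) * (δ ^ (2*p) * J) := by
    have h4 := (inv_mul_eq_iff_eq_mul₀ (by positivity : (δ:ℝ) ^ (n-1) ≠ 0)).mp hcomp.symm
    rw [h4, hδpow]
  -- pointwise comparison on the ball
  have hc1 : Continuous fun x : E => (δ^2 + ‖x‖^2) ^ p :=
    (continuous_const.add ((continuous_norm).pow 2)).rpow_const
      fun x => Or.inl (ne_of_gt (by positivity : (0:ℝ) < δ^2 + ‖x‖^2))
  have hc2 : Continuous fun x : E => (ε^2 + ‖x‖^2 + δ^2) ^ p :=
    ((continuous_const.add ((continuous_norm).pow 2)).add continuous_const).rpow_const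
      fun x => Or.inl (ne_of_gt (by positivity : (0:ℝ) < ε^2 + ‖x‖^2 + δ^2))
  have hmono : ∀ x ∈ closedBall (0:E) (ρ/2),
      (2:ℝ) ^ p * (δ^2 + ‖x‖^2) ^ p ≤ (ε^2 + ‖x‖^2 + δ^2) ^ p := by
    intro x _
    rw [← Real.mul_rpow (by norm_num) (by positivity)]
    apply Real.rpow_le_rpow_of_nonpos (by positivity) _ hp0
    nlinarith [sq_nonneg ε, sq_nonneg δ, sq_nonneg ‖x‖]
  have hIneq : (2:ℝ) ^ p * ∫ x in closedBall (0:E) (ρ/2), (δ^2 + ‖x‖^2) ^ p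
      ≤ ∫ x in closedBall (0:E) (ρ/2), (ε^2 + ‖x‖^2 + δ^2) ^ p := by
    rw [← integral_const_mul]
    apply setIntegral_mono_on
    · exact ((continuous_const.mul hc1).continuousOn).integrableOn_compact (isCompact_closedBall _ _)
    · exact (hc2.continuousOn).integrableOn_compact (isCompact_closedBall _ _)
    · exact measurableSet_closedBall
    · exact hmono
  -- assemble
  have hpow2 : (0:ℝ) < (2:ℝ) ^ p := Real.rpow_pos_of_pos (by norm_num) _
  have hδexp : δ * (δ ^ ((n:ℝ)-1) * δ ^ (2*p)) = δ ^ ((2:ℝ) - n) := by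
    rw [← Real.rpow_add hδ ((n:ℝ)-1) (2*p)]
    nth_rewrite 1 [← Real.rpow_one δ]
    rw [← Real.rpow_add hδ]
    congr 1
    rw [hp]; ring
  calc (2:ℝ) ^ p * δ ^ ((2:ℝ) - n) * (α - C * (δ/ρ) ^ ((n:ℝ)-1))
      ≤ (2:ℝ) ^ p * δ ^ ((2:ℝ) - n) * J := by
        apply mul_le_mul_of_nonneg_left hkey
        positivity
    _ = δ * ((2:ℝ) ^ p * ∫ x in closedBall (0:E) (ρ/2), (δ^2 + ‖x‖^2) ^ p) := by
        rw [hscale, ← hδexp]; ring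
    _ ≤ δ * ∫ x in closedBall (0:E) (ρ/2), (ε^2 + ‖x‖^2 + δ^2) ^ p := by
        apply mul_le_mul_of_nonneg_left hIneq hδ.le
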